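/- For n ≥ 1 and commuting variables u_i, v_j, the permanent of the n×n matrix (f(t u_i v_j)) equals Σ over non-increasing tuples m ∈ Z_{≥0}^n of t^{|m|} · |Stab_{S_n}(m)| · (∏_i f_{m_i}) · m_m(u) · m_m(v), where m_m denotes the monomial symmetric polynomial and Stab_{S_n}(m) is the stabilizer of m under the permutation action of S_n on coordinates. This identity holds over an arbitrary commutative ring. -/

import Mathlib

open scoped Classical

section Aux

open Finset

variable {n k : ℕ} {R : Type*} [CommRing R]

/-- antitone sort of a tuple -/
noncomputable def sortA (m : Fin n → Fin (k + 1)) : Fin n → Fin (k + 1) :=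
  m ∘ ⇑((Fin.revPerm).trans (Tuple.sort m))

lemma sortA_eq_comp (m : Fin n → Fin (k + 1)) :
    sortA m = (m ∘ ⇑(Tuple.sort m)) ∘ Fin.rev := rfl

lemma sortA_antitone (m : Fin n → Fin (k + 1)) : Antitone (sortA m) := by
  intro a b hab
  exact Tuple.monotone_sort m (show Fin.rev b ≤ Fin.rev a from Fin.rev_le_rev.mpr hab)

lemma sortA_comp_perm (m : Fin n → Fin (k + 1)) (τ : Equiv.Perm (Fin n)) :
    sortA (m ∘ ⇑τ) = sortA m := by
  have h := Tuple.comp_perm_comp_sort_eq_comp_sort (f := m) (σ := τ)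
  funext i
  simp only [sortA, Equiv.trans_apply, Fin.revPerm_apply, Function.comp_apply]
  exact congrFun h (Fin.rev i)

lemma sortA_eq_self {m : Fin n → Fin (k + 1)} (hm : Antitone m) : sortA m = m := by
  have h1 : Monotone (m ∘ ⇑(Fin.revPerm : Equiv.Perm (Fin n))) := by
    intro a b hab
    exact hm (show Fin.rev b ≤ Fin.rev a from Fin.rev_le_rev.mpr hab)
  have h2 := Tuple.comp_perm_comp_sort_eq_comp_sort (f := m) (σ := Fin.revPerm)
  rw [Tuple.sort_eq_refl_iff_monotone.mpr h1] at h2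
  simp only [Equiv.coe_refl, Function.comp_id] at h2
  funext i
  have := congrFun h2.symm (Fin.rev i)
  simpa [sortA, Fin.rev_rev] using this

lemma antitone_val_iff (m : Fin n → Fin (k + 1)) :
    Antitone (fun i => (m i : ℕ)) ↔ Antitone m := by
  constructor <;> intro h a b hab <;> have := h hab
  · exact Fin.le_def.mpr this
  · exact Fin.le_def.mp this

/-- translating a sum over the group: `∑_σ F(m∘σ) = |Stab(m)| * ∑_{w ∈ orbit(m)} F w`. -/
lemma sum_orbit (m : Fin n → Fin (k + 1)) (F : (Fin n → Fin (k + 1)) → R) :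
    ∑ σ : Equiv.Perm (Fin n), F (m ∘ ⇑σ) =
      ((Finset.univ.filter (fun σ : Equiv.Perm (Fin n) => ∀ i, m (σ i) = m i)).card : R) *
        ∑ w ∈ Finset.image (fun σ : Equiv.Perm (Fin n) => m ∘ ⇑σ) Finset.univ, F w := by
  rw [← Finset.sum_fiberwise_of_maps_to
    (g := fun σ : Equiv.Perm (Fin n) => m ∘ ⇑σ)
    (t := Finset.image (fun σ : Equiv.Perm (Fin n) => m ∘ ⇑σ) Finset.univ)
    (fun σ _ => Finset.mem_image_of_mem _ (Finset.mem_univ σ)),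
    Finset.mul_sum]
  refine Finset.sum_congr rfl fun w hw => ?_
  obtain ⟨τ, -, hτ⟩ := Finset.mem_image.1 hw
  have hcard : (Finset.univ.filter (fun σ : Equiv.Perm (Fin n) => m ∘ ⇑σ = w)).card =
      (Finset.univ.filter (fun σ : Equiv.Perm (Fin n) => ∀ i, m (σ i) = m i)).card := by
    refine Finset.card_bij' (fun σ _ => σ * τ⁻¹) (fun σ _ => σ * τ) ?_ ?_ ?_ ?_
    · intro σ hσ
      rw [Finset.mem_filter] at hσ ⊢
      refine ⟨Finset.mem_univ _, fun i => ?_⟩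
      have h1 : m (σ (τ⁻¹ i)) = w (τ⁻¹ i) := congrFun hσ.2 (τ⁻¹ i)
      have h2 : m (τ (τ⁻¹ i)) = w (τ⁻¹ i) := congrFun hτ (τ⁻¹ i)
      simpa [Equiv.Perm.mul_apply] using h1.trans (h2.symm.trans (by rw [← Equiv.Perm.mul_apply, mul_inv_cancel, Equiv.Perm.one_apply]))
    · intro σ hσ
      rw [Finset.mem_filter] at hσ ⊢
      refine ⟨Finset.mem_univ _, ?_⟩
      funext i
      have h1 : m (σ (τ i)) = m (τ i) := hσ.2 (τ i)
      have h2 : m (τ i) = w i := congrFun hτ i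
      simpa [Equiv.Perm.mul_apply] using h1.trans h2
    · intro σ _; group
    · intro σ _; group
  rw [← hcard, Finset.sum_congr rfl (fun σ hσ => by rw [(Finset.mem_filter.1 hσ).2]),
    Finset.sum_const, nsmul_eq_mul]

end Aux

/-- Permanent identity (bosonic, over an arbitrary commutative ring):
`perm f[t u vᵀ] = ∑_{m non-increasing} t^{|m|} |Stab_{S_n}(m)| (∏_i f_{m_i}) m_m(u) m_m(v)`,
stated coefficient-wise in `t`. The monomial symmetric polynomial `m_m(u)` is the sum
of the distinct monomials `u^{w}` as `w` ranges over the `S_n`-orbit of `m`. -/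
theorem stmt2 (R : Type*) [CommRing R] (n : ℕ) (hn : 1 ≤ n)
    (u v : Fin n → R) (fc : ℕ → R) (k : ℕ) :
    (PowerSeries.coeff k)
      (∑ σ : Equiv.Perm (Fin n), ∏ i : Fin n,
        PowerSeries.mk fun M => fc M * (u i * v (σ i)) ^ M) =
    ∑ m : Fin n → Fin (k + 1),
      if Antitone (fun i => (m i : ℕ)) ∧ (∑ i, (m i : ℕ)) = k then
        (((Finset.univ.filter (fun σ : Equiv.Perm (Fin n) => ∀ i, m (σ i) = m i)).card : R)) *
        (∏ i : Fin n, fc (m i)) *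
        (∑ w ∈ Finset.image (fun σ : Equiv.Perm (Fin n) => m ∘ σ) Finset.univ,
          ∏ i : Fin n, u i ^ (w i : ℕ)) *
        (∑ w ∈ Finset.image (fun σ : Equiv.Perm (Fin n) => m ∘ σ) Finset.univ,
          ∏ i : Fin n, v i ^ (w i : ℕ))
      else 0 := by
  classical
  set P : (Fin n → Fin (k + 1)) → R := fun m => ∏ i, fc (m i) with hP
  set U : (Fin n → Fin (k + 1)) → R := fun m => ∏ i, u i ^ (m i : ℕ) with hU
  set V : (Fin n → Fin (k + 1)) → R := fun m => ∏ i, v i ^ (m i : ℕ) with hV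
  set A : Finset (Fin n → Fin (k + 1)) :=
    Finset.univ.filter (fun m => (∑ i, (m i : ℕ)) = k) with hA
  set T : Finset (Fin n → Fin (k + 1)) :=
    Finset.univ.filter
      (fun m => Antitone (fun i => (m i : ℕ)) ∧ (∑ i, (m i : ℕ)) = k) with hT
  -- Step 1: compute the coefficient via coeff_prod, and convert the antidiagonal
  -- to `Fin (k+1)`-valued tuples.
  have step1 : ∀ σ : Equiv.Perm (Fin n),
      (PowerSeries.coeff k) (∏ i : Fin n,
        PowerSeries.mk fun M => fc M * (u i * v (σ i)) ^ M) =
      ∑ m ∈ A, ∏ i, fc (m i) * (u i * v (σ i)) ^ (m i : ℕ) := by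
    intro σ
    rw [PowerSeries.coeff_prod]
    refine Finset.sum_bij'
      (i := fun l hl => fun i : Fin n =>
        (⟨l i, by
          have hsum : (∑ j, l j) = k := (Finset.mem_finsuppAntidiag.1 hl).1
          have : l i ≤ k := hsum ▸ Finset.single_le_sum (f := fun j => l j)
            (fun j _ => Nat.zero_le _) (Finset.mem_univ i)
          omega⟩ : Fin (k + 1)))
      (j := fun m _ => Finsupp.equivFunOnFinite.symm (fun i => (m i : ℕ)))
      ?_ ?_ ?_ ?_ ?_
    · intro l hl
      have hsum : (∑ j, l j) = k := (Finset.mem_finsuppAntidiag.1 hl).1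
      simpa [hA] using hsum
    · intro m hm
      simp only [hA, Finset.mem_filter] at hm
      rw [Finset.mem_finsuppAntidiag]
      constructor
      · simpa [Finsupp.equivFunOnFinite] using hm.2
      · exact Finset.subset_univ _
    · intro l hl
      ext i
      simp [Finsupp.equivFunOnFinite]
    · intro m hm
      funext i
      simp [Finsupp.equivFunOnFinite]
    · intro l hl
      refine Finset.prod_congr rfl fun i _ => ?_
      simp [PowerSeries.coeff_mk]
  rw [map_sum]
  simp_rw [step1]
  rw [Finset.sum_comm]
  -- Step 2: rewrite the inner summand and sum over σ
  have step2 : ∀ m ∈ A,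
      (∑ σ : Equiv.Perm (Fin n), ∏ i, fc (m i) * (u i * v (σ i)) ^ (m i : ℕ)) =
      P m * U m * ∑ σ : Equiv.Perm (Fin n), V (m ∘ ⇑σ) := by
    intro m _
    have hsplit : ∀ σ : Equiv.Perm (Fin n),
        (∏ i, fc (m i) * (u i * v (σ i)) ^ (m i : ℕ)) =
        P m * U m * ∏ i, v (σ i) ^ (m i : ℕ) := by
      intro σ
      simp only [hP, hU, mul_pow, ← Finset.prod_mul_distrib, Finset.prod_mul_distrib]
      ring
    simp_rw [hsplit]
    rw [← Finset.mul_sum]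
    congr 1
    have key : ∀ σ : Equiv.Perm (Fin n),
        (∏ i, v (σ i) ^ (m i : ℕ)) = V (m ∘ ⇑σ⁻¹) := by
      intro σ
      have h1 : (∏ i, v (σ i) ^ ((m (σ⁻¹ (σ i))) : ℕ)) = ∏ j, v j ^ ((m (σ⁻¹ j)) : ℕ) :=
        Equiv.prod_comp σ (fun j => v j ^ ((m (σ⁻¹ j)) : ℕ))
      simp only [← Equiv.Perm.mul_apply, inv_mul_cancel, Equiv.Perm.one_apply] at h1
      simpa [hV] using h1
    simp_rw [key]
    exact Equiv.sum_comp (Equiv.inv (Equiv.Perm (Fin n))) (fun σ => V (m ∘ ⇑σ))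
  rw [Finset.sum_congr rfl step2]
  -- Step 3: rewrite the RHS as a sum over `T`
  rw [show (∑ m : Fin n → Fin (k + 1),
      if Antitone (fun i => (m i : ℕ)) ∧ (∑ i, (m i : ℕ)) = k then
        (((Finset.univ.filter (fun σ : Equiv.Perm (Fin n) => ∀ i, m (σ i) = m i)).card : R)) *
        (∏ i : Fin n, fc (m i)) *
        (∑ w ∈ Finset.image (fun σ : Equiv.Perm (Fin n) => m ∘ σ) Finset.univ,
          ∏ i : Fin n, u i ^ (w i : ℕ)) *
        (∑ w ∈ Finset.image (fun σ : Equiv.Perm (Fin n) => m ∘ σ) Finset.univ,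
          ∏ i : Fin n, v i ^ (w i : ℕ))
      else 0) = ∑ m ∈ T,
        (((Finset.univ.filter (fun σ : Equiv.Perm (Fin n) => ∀ i, m (σ i) = m i)).card : R)) *
        (∏ i : Fin n, fc (m i)) *
        (∑ w ∈ Finset.image (fun σ : Equiv.Perm (Fin n) => m ∘ σ) Finset.univ,
          ∏ i : Fin n, u i ^ (w i : ℕ)) *
        (∑ w ∈ Finset.image (fun σ : Equiv.Perm (Fin n) => m ∘ σ) Finset.univ,
          ∏ i : Fin n, v i ^ (w i : ℕ))
    from (Finset.sum_filter _ _).symm]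
  -- Step 4: group the LHS by the antitone sort
  have maps : ∀ m ∈ A, sortA m ∈ T := by
    intro m hm
    simp only [hA, Finset.mem_filter, Finset.mem_univ, true_and] at hm
    simp only [hT, Finset.mem_filter, Finset.mem_univ, true_and]
    refine ⟨(antitone_val_iff _).mpr (sortA_antitone m), ?_⟩
    have := Equiv.sum_comp ((Fin.revPerm).trans (Tuple.sort m)) (fun i => (m i : ℕ))
    exact this.trans hm
  rw [← Finset.sum_fiberwise_of_maps_to maps]
  refine Finset.sum_congr rfl fun m₀ hm₀ => ?_
  simp only [hT, Finset.mem_filter, Finset.mem_univ, true_and] at hm₀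
  obtain ⟨hanti, hsum⟩ := hm₀
  have hanti' : Antitone m₀ := (antitone_val_iff m₀).mp hanti
  -- the fiber over m₀ is the orbit of m₀
  have horb : A.filter (fun m => sortA m = m₀) =
      Finset.image (fun σ : Equiv.Perm (Fin n) => m₀ ∘ ⇑σ) Finset.univ := by
    ext m
    simp only [hA, Finset.mem_filter, Finset.mem_univ, true_and, Finset.mem_image]
    constructor
    · rintro ⟨hsm, hs⟩
      refine ⟨((Fin.revPerm).trans (Tuple.sort m))⁻¹, ?_⟩
      funext i
      rw [← hs]
      show m ((((Fin.revPerm).trans (Tuple.sort m)))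
        ((((Fin.revPerm).trans (Tuple.sort m)))⁻¹ i)) = m i
      rw [← Equiv.Perm.mul_apply, mul_inv_cancel, Equiv.Perm.one_apply]
    · rintro ⟨σ, rfl⟩
      constructor
      · have := Equiv.sum_comp σ (fun i => (m₀ i : ℕ))
        exact this.trans hsum
      · rw [sortA_comp_perm, sortA_eq_self hanti']
  rw [horb]
  have hPinv : ∀ σ : Equiv.Perm (Fin n), P (m₀ ∘ ⇑σ) = P m₀ := fun σ =>
    Equiv.prod_comp σ (fun i => fc (m₀ i : ℕ))
  have hCinv : ∀ τ : Equiv.Perm (Fin n),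
      (∑ σ : Equiv.Perm (Fin n), V ((m₀ ∘ ⇑τ) ∘ ⇑σ)) =
      ∑ σ : Equiv.Perm (Fin n), V (m₀ ∘ ⇑σ) := by
    intro τ
    have h := Equiv.sum_comp (Equiv.mulLeft τ) (fun σ : Equiv.Perm (Fin n) => V (m₀ ∘ ⇑σ))
    have h2 : ∀ σ : Equiv.Perm (Fin n), (m₀ ∘ ⇑τ) ∘ ⇑σ = m₀ ∘ ⇑(τ * σ) := fun σ => rfl
    simp only [Equiv.coe_mulLeft] at h
    simpa only [h2] using h
  have horbsum := sum_orbit (R := R) m₀ V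
  have step5 : ∀ w ∈ Finset.image (fun σ : Equiv.Perm (Fin n) => m₀ ∘ ⇑σ) Finset.univ,
      P w * U w * (∑ σ : Equiv.Perm (Fin n), V (w ∘ ⇑σ)) =
      U w * (P m₀ *
        ((((Finset.univ.filter
          (fun σ : Equiv.Perm (Fin n) => ∀ i, m₀ (σ i) = m₀ i)).card : R)) *
         ∑ w ∈ Finset.image (fun σ : Equiv.Perm (Fin n) => m₀ ∘ ⇑σ) Finset.univ, V w)) := by
    intro w hw
    obtain ⟨τ, -, rfl⟩ := Finset.mem_image.1 hw
    rw [hPinv, hCinv, horbsum]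
    ring
  rw [Finset.sum_congr rfl step5, ← Finset.sum_mul]
  simp only [hP, hU, hV]
  ring
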